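/- Let M be a commutative monoid with zero and J a proper ideal of M. Then there exists an irreducible ideal L of M with J ⊆ L that is minimal among all irreducible ideals containing J (i.e., no irreducible ideal L' satisfies J ⊆ L' ⊊ L). -/
import Mathlib


/-- An ideal of a commutative monoid: a nonempty subset `I` such that
`i ∈ I` and `m ∈ N` imply `i * m ∈ I`. -/
def IsIdeal {N : Type*} [CommMonoid N] (I : Set N) : Prop :=
  I.Nonempty ∧ ∀ i ∈ I, ∀ m : N, i * m ∈ I

/-- The irreducibility condition on an ideal `L`: whenever `L = I ∩ J` for
ideals `I`, `J`, then `L = I` or `L = J`. -/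
def IrredCond {N : Type*} [CommMonoid N] (L : Set N) : Prop :=
  ∀ I J : Set N, IsIdeal I → IsIdeal J → L = I ∩ J → L = I ∨ L = J

/-- The strong irreducibility condition on an ideal `L`: whenever
`I ∩ J ⊆ L` for ideals `I`, `J`, then `I ⊆ L` or `J ⊆ L`. -/
def StrIrredCond {N : Type*} [CommMonoid N] (L : Set N) : Prop :=
  ∀ I J : Set N, IsIdeal I → IsIdeal J → I ∩ J ⊆ L → I ⊆ L ∨ J ⊆ L

/-- The radical of a subset `I`: all elements some positive power of which
lies in `I`. -/
def radicalSet {N : Type*} [CommMonoid N] (I : Set N) : Set N :=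
  {m : N | ∃ k : ℕ, 0 < k ∧ m ^ k ∈ I}

/-- A primary ideal: a proper ideal `I` such that `x * y ∈ I` implies
`x ∈ I` or `y ^ k ∈ I` for some positive integer `k`. -/
def IsPrimaryIdeal {N : Type*} [CommMonoid N] (I : Set N) : Prop :=
  IsIdeal I ∧ I ≠ Set.univ ∧
    ∀ x y : N, x * y ∈ I → x ∈ I ∨ ∃ k : ℕ, 0 < k ∧ y ^ k ∈ I

/-- A union of two ideals is an ideal. -/
lemma IsIdeal.union {N : Type*} [CommMonoid N] {I J : Set N} (hI : IsIdeal I)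
    (hJ : IsIdeal J) : IsIdeal (I ∪ J) := by
  refine ⟨hI.1.mono Set.subset_union_left, ?_⟩
  rintro i (hi | hi) m
  · exact Or.inl (hI.2 i hi m)
  · exact Or.inr (hJ.2 i hi m)

/-- For ideals, irreducibility implies strong irreducibility. -/
lemma IrredCond.strIrredCond {N : Type*} [CommMonoid N] {L : Set N} (hL : IsIdeal L)
    (h : IrredCond L) : StrIrredCond L := by
  intro I J hI hJ hIJ
  have key : L = (L ∪ I) ∩ (L ∪ J) := by
    rw [← Set.union_inter_distrib_left]
    exact (Set.union_eq_self_of_subset_right hIJ).symm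
  rcases h _ _ (hL.union hI) (hL.union hJ) key with h' | h'
  · exact Or.inl (h' ▸ Set.subset_union_right)
  · exact Or.inr (h' ▸ Set.subset_union_right)

/-- Strong irreducibility implies irreducibility. -/
lemma StrIrredCond.irredCond {N : Type*} [CommMonoid N] {L : Set N}
    (h : StrIrredCond L) : IrredCond L := by
  intro I J hI hJ hIJ
  rcases h I J hI hJ (le_of_eq hIJ.symm) with h' | h'
  · exact Or.inl (le_antisymm (hIJ ▸ Set.inter_subset_left) h')
  · exact Or.inr (le_antisymm (hIJ ▸ Set.inter_subset_right) h')

/-- For each proper ideal `J` of a nontrivial commutative monoid with zero,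
there is a minimal irreducible ideal over `J`. -/
theorem exists_minimal_irreducible_over {M : Type*} [CommMonoidWithZero M] [Nontrivial M]
    (J : Set M) (hJ : IsIdeal J) (hproper : J ≠ Set.univ) :
    ∃ L : Set M, IsIdeal L ∧ IrredCond L ∧ J ⊆ L ∧
      ∀ L' : Set M, IsIdeal L' → IrredCond L' → J ⊆ L' → L' ⊆ L → L' = L := by
  set S : Set (Set M) := {L | IsIdeal L ∧ StrIrredCond L ∧ J ⊆ L} with hS
  have huniv : Set.univ ∈ S :=
    ⟨⟨⟨1, trivial⟩, fun _ _ _ => trivial⟩, fun I _ _ _ _ => Or.inl (Set.subset_univ _),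
      Set.subset_univ _⟩
  have hchainC : ∀ c ⊆ S, IsChain (· ⊆ ·) c → c.Nonempty →
      ∃ lb ∈ S, ∀ s ∈ c, lb ⊆ s := by
    intro c hcS hchain hcne
    refine ⟨⋂₀ c, ⟨⟨?_, ?_⟩, ?_, ?_⟩, fun s hs => Set.sInter_subset_of_mem hs⟩
    · obtain ⟨x, hx⟩ := hJ.1
      exact ⟨x, fun s hs => (hcS hs).2.2 hx⟩
    · intro i hi m
      exact fun s hs => (hcS hs).1.2 i (hi s hs) m
    · -- strong irreducibility of the intersection of a chain
      intro I J' hI hJ' hsub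
      by_contra hcon
      push_neg at hcon
      obtain ⟨⟨a, haI, hanL⟩, ⟨b, hbJ, hbnL⟩⟩ :
          (∃ a, a ∈ I ∧ a ∉ ⋂₀ c) ∧ ∃ b, b ∈ J' ∧ b ∉ ⋂₀ c := by
        constructor
        · exact Set.not_subset.mp hcon.1
        · exact Set.not_subset.mp hcon.2
      simp only [Set.mem_sInter, not_forall] at hanL hbnL
      obtain ⟨Ka, hKa, haK⟩ := hanL
      obtain ⟨Kb, hKb, hbK⟩ := hbnL
      rcases hchain.total hKa hKb with hle | hle
      · rcases (hcS hKa).2.1 I J' hI hJ' ((hsub.trans (Set.sInter_subset_of_mem hKa)))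
          with h | h
        · exact haK (h haI)
        · exact hbK (hle (h hbJ))
      · rcases (hcS hKb).2.1 I J' hI hJ' ((hsub.trans (Set.sInter_subset_of_mem hKb)))
          with h | h
        · exact haK (hle (h haI))
        · exact hbK (h hbJ)
    · exact Set.subset_sInter fun s hs => (hcS hs).2.2
  obtain ⟨m, -, hmS, hmin⟩ := zorn_superset_nonempty S hchainC Set.univ huniv
  refine ⟨m, hmS.1, hmS.2.1.irredCond, hmS.2.2, ?_⟩
  intro L' hL'i hL'irr hJL' hL'm
  exact le_antisymm hL'm (hmin ⟨hL'i, hL'irr.strIrredCond hL'i, hJL'⟩ hL'm)
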